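/- For every y > 0, the double integral ∫₀^∞ [∫₀^∞ (1 - e^{-s·y}) t e^{-t·s} ds] e^{-t} dt equals -y e^y Ei(-y), where Ei(-y) = -∫_y^∞ e^{-u}/u du. -/

import Mathlib

open MeasureTheory Real

lemma integral_exp_neg_mul_Ioi_zero' {b : ℝ} (hb : 0 < b) :
    ∫ s in Set.Ioi (0 : ℝ), exp (-(b * s)) = b⁻¹ := by
  have h := integral_comp_mul_left_Ioi (fun x => exp (-x)) 0 hb
  simp only [mul_zero, integral_exp_neg_Ioi, neg_zero, exp_zero, smul_eq_mul, mul_one] at h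
  simpa using h

lemma inner_integral_eq (y t : ℝ) (hy : 0 < y) (ht : 0 < t) :
    ∫ s in Set.Ioi (0 : ℝ), (1 - exp (-(s * y))) * (t * exp (-(t * s))) = y / (t + y) := by
  have hty : 0 < t + y := by linarith
  have key : ∀ s : ℝ, (1 - exp (-(s * y))) * (t * exp (-(t * s)))
      = t * exp (-(t * s)) - t * exp (-((t + y) * s)) := by
    intro s
    rw [show (-((t + y) * s)) = -(t * s) + -(s * y) by ring, exp_add]
    ring
  have hint1 : IntegrableOn (fun s => t * exp (-(t * s))) (Set.Ioi (0 : ℝ)) := by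
    have := (exp_neg_integrableOn_Ioi 0 ht).const_mul t
    simp only [neg_mul] at this
    exact this
  have hint2 : IntegrableOn (fun s => t * exp (-((t + y) * s))) (Set.Ioi (0 : ℝ)) := by
    have h := (exp_neg_integrableOn_Ioi 0 hty).const_mul t
    simp only [neg_mul] at h
    exact h
  simp only [key]
  rw [integral_sub hint1 hint2, integral_const_mul, integral_const_mul,
    integral_exp_neg_mul_Ioi_zero' ht, integral_exp_neg_mul_Ioi_zero' hty]
  field_simp
  ring

lemma shift_integral (y : ℝ) :
    ∫ t in Set.Ioi (0 : ℝ), exp (-(t + y)) / (t + y) = ∫ u in Set.Ioi y, exp (-u) / u := by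
  have hmp : MeasurePreserving (fun x : ℝ => x + y) volume volume :=
    measurePreserving_add_right volume y
  have hemb : MeasurableEmbedding (fun x : ℝ => x + y) :=
    (MeasurableEquiv.addRight y).measurableEmbedding
  have h := hmp.setIntegral_preimage_emb hemb (fun u => exp (-u) / u) (Set.Ioi y)
  have hpre : (fun x : ℝ => x + y) ⁻¹' Set.Ioi y = Set.Ioi 0 := by
    ext x; simp
  rw [hpre] at h
  exact h

theorem double_integral_cdf_Y3 (y : ℝ) (hy : 0 < y) :
    ∫ t in Set.Ioi (0 : ℝ),
        (∫ s in Set.Ioi (0 : ℝ), (1 - exp (-(s * y))) * (t * exp (-(t * s)))) * exp (-t)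
      = -y * exp y * (-(∫ u in Set.Ioi y, exp (-u) / u)) := by
  have step1 : ∫ t in Set.Ioi (0 : ℝ),
        (∫ s in Set.Ioi (0 : ℝ), (1 - exp (-(s * y))) * (t * exp (-(t * s)))) * exp (-t)
      = ∫ t in Set.Ioi (0 : ℝ), y * exp y * (exp (-(t + y)) / (t + y)) := by
    refine setIntegral_congr_fun measurableSet_Ioi (fun t ht => ?_)
    have ht : 0 < t := ht
    rw [inner_integral_eq y t hy ht]
    have hty : t + y ≠ 0 := by positivity
    have he : exp (-(t + y)) = exp (-t) / exp y := by
      rw [show (-(t + y)) = -t - y by ring, exp_sub]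
    rw [he]
    field_simp
  rw [step1, integral_const_mul, shift_integral]
  ring
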